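/- Let G = (V,E) be a finite undirected graph, let G'' = (V'',E'') be the VSC reduction graph of G, and let l be a natural number. Then G has a vertex cover of size at most l if and only if there exists a vertex set F ⊆ V'' with |F| ≤ l such that the directed graph G'' \ F obtained by deleting the vertices of F and all edges incident to them is singly-connected. -/

import Mathlib

/-- A simple (directed) path from `v` to `w` in the directed graph with edge relation `E`:
a nonempty list of pairwise distinct vertices starting at `v`, ending at `w`,
with consecutive vertices joined by edges. -/
def IsSimplePath {V : Type*} (E : V → V → Prop) (v w : V) (p : List V) : Prop :=
  p.Chain' E ∧ p.head? = some v ∧ p.getLast? = some w ∧ p.Nodup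

/-- A directed graph is singly-connected if for every pair of vertices there is
at most one simple path between them. -/
def SinglyConnected {V : Type*} (E : V → V → Prop) : Prop :=
  ∀ v w : V, ∀ p q : List V, IsSimplePath E v w p → IsSimplePath E v w q → p = q

/-- The vertex set of the VSC reduction graph of an undirected graph `G`: a vertex `v'`
for every vertex `v` of `G` and two vertices `e'`, `e''` for every edge `e` of `G`. -/
def VSCVert {V : Type*} (G : SimpleGraph V) : Type _ :=
  V ⊕ (G.edgeSet ⊕ G.edgeSet)

/-- The vertex `v'` of the VSC reduction graph. -/
def VSCVert.vv {V : Type*} (G : SimpleGraph V) (v : V) : VSCVert G :=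
  Sum.inl v

/-- The vertex `e'` of the VSC reduction graph. -/
def VSCVert.eA {V : Type*} (G : SimpleGraph V) (e : G.edgeSet) : VSCVert G :=
  Sum.inr (Sum.inl e)

/-- The vertex `e''` of the VSC reduction graph. -/
def VSCVert.eB {V : Type*} (G : SimpleGraph V) (e : G.edgeSet) : VSCVert G :=
  Sum.inr (Sum.inr e)

/-- The edge set of the VSC reduction graph of `G`: for every undirected edge
`e = {u, w}` of `G`, the four edges `(e', u')`, `(e', w')`, `(u', e'')`, `(w', e'')`
(i.e. edges `(e', v')` and `(v', e'')` for every endpoint `v` of `e`). -/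
def VSCEdges {V : Type*} (G : SimpleGraph V) : Set (VSCVert G × VSCVert G) :=
  {p | (∃ (e : G.edgeSet) (v : V), v ∈ (e : Sym2 V) ∧ p = (VSCVert.eA G e, VSCVert.vv G v)) ∨
       (∃ (e : G.edgeSet) (v : V), v ∈ (e : Sym2 V) ∧ p = (VSCVert.vv G v, VSCVert.eB G e))}

/-- A vertex cover of the undirected graph `G`: a set of vertices meeting every edge. -/
def IsVertexCover {V : Type*} (G : SimpleGraph V) (U : Set V) : Prop :=
  ∀ e ∈ G.edgeSet, ∃ v ∈ U, v ∈ e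

-- auxiliary
def vscRank {V : Type*} {G : SimpleGraph V} : VSCVert G → ℕ
  | Sum.inl _ => 1
  | Sum.inr (Sum.inl _) => 0
  | Sum.inr (Sum.inr _) => 2

lemma vsc_edge_cases {V : Type*} {G : SimpleGraph V} {x y : VSCVert G}
    (h : (x, y) ∈ VSCEdges G) :
    (∃ (e : G.edgeSet) (v : V), v ∈ (e : Sym2 V) ∧ x = VSCVert.eA G e ∧ y = VSCVert.vv G v) ∨
    (∃ (e : G.edgeSet) (v : V), v ∈ (e : Sym2 V) ∧ x = VSCVert.vv G v ∧ y = VSCVert.eB G e) := by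
  rcases h with ⟨e, v, hv, hp⟩ | ⟨e, v, hv, hp⟩
  · exact Or.inl ⟨e, v, hv, congrArg Prod.fst hp, congrArg Prod.snd hp⟩
  · exact Or.inr ⟨e, v, hv, congrArg Prod.fst hp, congrArg Prod.snd hp⟩

lemma vsc_rank_edge {V : Type*} {G : SimpleGraph V} {x y : VSCVert G}
    (h : (x, y) ∈ VSCEdges G) : vscRank y = vscRank x + 1 := by
  rcases vsc_edge_cases h with ⟨e, v, hv, hx, hy⟩ | ⟨e, v, hv, hx, hy⟩ <;>
    subst hx <;> subst hy <;> rfl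

lemma vsc_rank_le {V : Type*} {G : SimpleGraph V} (x : VSCVert G) : vscRank x ≤ 2 := by
  rcases x with v | e | e <;> simp [vscRank]

lemma vsc_middle {V : Type*} {G : SimpleGraph V} {x y z : VSCVert G}
    (h1 : (x, y) ∈ VSCEdges G) (h2 : (y, z) ∈ VSCEdges G) :
    ∃ (e f : G.edgeSet) (u : V), u ∈ (e : Sym2 V) ∧ u ∈ (f : Sym2 V) ∧
      x = VSCVert.eA G e ∧ y = VSCVert.vv G u ∧ z = VSCVert.eB G f := by
  rcases vsc_edge_cases h1 with ⟨e, u, hu, hx, hy⟩ | ⟨e, u, hu, hx, hy⟩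
  · rcases vsc_edge_cases h2 with ⟨f, u', hu', hy', hz⟩ | ⟨f, u', hu', hy', hz⟩
    · rw [hy] at hy'; cases hy'
    · rw [hy] at hy'
      have huu : u = u' := Sum.inl.inj hy'
      subst huu
      exact ⟨e, f, u, hu, hu', hx, hy, hz⟩
  · rcases vsc_edge_cases h2 with ⟨f, u', hu', hy', hz⟩ | ⟨f, u', hu', hy', hz⟩
    · rw [hy] at hy'; cases hy'
    · rw [hy] at hy'; cases hy'

lemma vsc_path_shape {V : Type*} {G : SimpleGraph V} {F : Set (VSCVert G)}
    {v w : {x : VSCVert G // x ∉ F}} {p : List {x : VSCVert G // x ∉ F}}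
    (hp : IsSimplePath (fun a b : {x : VSCVert G // x ∉ F} => (a.1, b.1) ∈ VSCEdges G) v w p) :
    (p = [v] ∧ w = v) ∨ p = [v, w] ∨ ∃ a, p = [v, a, w] := by
  obtain ⟨hc, hh, hl, hn⟩ := hp
  match p with
  | [] => simp at hh
  | [x] =>
    simp only [List.head?_cons, Option.some.injEq] at hh
    have hl' : x = w := by simpa using hl
    exact Or.inl ⟨by rw [hh], by rw [← hh, hl']⟩
  | [x, y] =>
    have hh' : x = v := by simpa using hh
    have hl' : y = w := by simpa using hl
    exact Or.inr (Or.inl (by rw [hh', hl']))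
  | [x, y, z] =>
    have hh' : x = v := by simpa using hh
    have hl' : z = w := by simpa using hl
    exact Or.inr (Or.inr ⟨y, by rw [hh', hl']⟩)
  | x :: y :: z :: t :: rest =>
    exfalso
    rw [List.Chain', List.isChain_cons_cons] at hc
    obtain ⟨e1, hc⟩ := hc
    rw [List.isChain_cons_cons] at hc
    obtain ⟨e2, hc⟩ := hc
    rw [List.isChain_cons_cons] at hc
    obtain ⟨e3, _⟩ := hc
    have r1 := vsc_rank_edge e1
    have r2 := vsc_rank_edge e2
    have r3 := vsc_rank_edge e3
    have := vsc_rank_le t.1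
    omega

lemma vsc_rank_last {V : Type*} {G : SimpleGraph V} {F : Set (VSCVert G)}
    {v w : {x : VSCVert G // x ∉ F}} {p : List {x : VSCVert G // x ∉ F}}
    (hp : IsSimplePath (fun a b : {x : VSCVert G // x ∉ F} => (a.1, b.1) ∈ VSCEdges G) v w p) :
    vscRank w.1 = vscRank v.1 + (p.length - 1) := by
  rcases vsc_path_shape hp with ⟨h1, h2⟩ | h2 | ⟨a, h3⟩
  · subst h2; subst h1; simp
  · obtain ⟨hc, -, -, -⟩ := hp
    subst h2
    rw [List.Chain', List.isChain_cons_cons] at hc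
    have := vsc_rank_edge hc.1
    simp; omega
  · obtain ⟨hc, -, -, -⟩ := hp
    subst h3
    rw [List.Chain', List.isChain_cons_cons, List.isChain_cons_cons] at hc
    have := vsc_rank_edge hc.1
    have := vsc_rank_edge hc.2.1
    simp; omega

noncomputable def vscProj {V : Type*} {G : SimpleGraph V} : VSCVert G → V
  | Sum.inl v => v
  | Sum.inr (Sum.inl e) => (Quot.out (e : Sym2 V)).1
  | Sum.inr (Sum.inr e) => (Quot.out (e : Sym2 V)).1


/-- a finite undirected graph `G` has a vertex cover of size at most `l`
iff there is a set `F` of at most `l` vertices of the VSC reduction graph `G''` of `G`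
whose deletion (together with all incident edges) from `G''` leaves a singly-connected
directed graph. -/
theorem vertexCover_iff_vsc {V : Type*} [Finite V] (G : SimpleGraph V) (l : ℕ) :
    (∃ U : Set V, IsVertexCover G U ∧ U.ncard ≤ l) ↔
      (∃ F : Set (VSCVert G), F.ncard ≤ l ∧
        SinglyConnected (fun a b : {x : VSCVert G // x ∉ F} =>
          (a.1, b.1) ∈ VSCEdges G)) := by
  constructor
  · rintro ⟨U, hU, hcard⟩
    refine ⟨VSCVert.vv G '' U, ?_, ?_⟩
    · have hinj : Function.Injective (VSCVert.vv G) := fun a b h => Sum.inl.inj h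
      rw [Set.ncard_image_of_injective U hinj]
      exact hcard
    · intro v w p q hp hq
      have lp := vsc_rank_last hp
      have lq := vsc_rank_last hq
      rcases vsc_path_shape hp with ⟨hp1, hvw⟩ | hp2 | ⟨a, hp3⟩ <;>
        rcases vsc_path_shape hq with ⟨hq1, hvw'⟩ | hq2 | ⟨b, hq3⟩
      · rw [hp1, hq1]
      · exfalso; rw [hp1] at lp; rw [hq2] at lq; simp at lp lq; omega
      · exfalso; rw [hp1] at lp; rw [hq3] at lq; simp at lp lq; omega
      · exfalso; rw [hp2] at lp; rw [hq1] at lq; simp at lp lq; omega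
      · rw [hp2, hq2]
      · exfalso; rw [hp2] at lp; rw [hq3] at lq; simp at lp lq; omega
      · exfalso; rw [hp3] at lp; rw [hq1] at lq; simp at lp lq; omega
      · exfalso; rw [hp3] at lp; rw [hq2] at lq; simp at lp lq; omega
      · -- both three-vertex paths
        have hcp := hp.1
        rw [hp3, List.Chain', List.isChain_cons_cons, List.isChain_cons_cons] at hcp
        have hcq := hq.1
        rw [hq3, List.Chain', List.isChain_cons_cons, List.isChain_cons_cons] at hcq
        obtain ⟨e, f, u, hue, huf, hv, ha, hw⟩ := vsc_middle hcp.1 hcp.2.1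
        obtain ⟨e', f', u', hue', huf', hv', ha', hw'⟩ := vsc_middle hcq.1 hcq.2.1
        have he : e = e' := by
          rw [hv] at hv'; exact Sum.inl.inj (Sum.inr.inj hv')
        have hf : f = f' := by
          rw [hw] at hw'; exact Sum.inr.inj (Sum.inr.inj hw')
        subst he; subst hf
        have hab : u = u' := by
          by_cases hef : e = f
          · subst hef
            obtain ⟨x, hxU, hxe⟩ := hU e.1 e.2
            have hxF : VSCVert.vv G x ∈ VSCVert.vv G '' U := ⟨x, hxU, rfl⟩
            have hu_ne : u ≠ x := fun h => a.2 (by rw [ha, h]; exact hxF)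
            have hu'_ne : u' ≠ x := fun h => b.2 (by rw [ha', h]; exact hxF)
            have he2 : (e : Sym2 V) = s(u, x) :=
              (Sym2.mem_and_mem_iff hu_ne).mp ⟨hue, hxe⟩
            have hmem : u' ∈ s(u, x) := he2 ▸ hue'
            rcases Sym2.mem_iff.mp hmem with h | h
            · exact h.symm
            · exact absurd h hu'_ne
          · by_contra huu
            have h1 : (e : Sym2 V) = s(u, u') :=
              (Sym2.mem_and_mem_iff huu).mp ⟨hue, hue'⟩
            have h2 : (f : Sym2 V) = s(u, u') :=
              (Sym2.mem_and_mem_iff huu).mp ⟨huf, huf'⟩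
            exact hef (Subtype.ext (h1.trans h2.symm))
        have hab' : a = b := Subtype.ext (by rw [ha, ha', hab])
        rw [hp3, hq3, hab']
  · rintro ⟨F, hF, hsc⟩
    haveI hsym : Finite (Sym2 V) := Quot.finite _
    haveI hfin : Finite (VSCVert G) := by unfold VSCVert; infer_instance
    refine ⟨vscProj '' F, ?_, le_trans (Set.ncard_image_le (Set.toFinite F)) hF⟩
    intro s
    induction s using Sym2.ind with
    | _ u w =>
      intro hs
      have huw : u ≠ w := G.ne_of_adj hs
      set e : G.edgeSet := ⟨s(u, w), hs⟩ with he_def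
      have hu_mem : u ∈ (e : Sym2 V) := Sym2.mem_mk_left u w
      have hw_mem : w ∈ (e : Sym2 V) := Sym2.mem_mk_right u w
      have key : VSCVert.vv G u ∈ F ∨ VSCVert.vv G w ∈ F ∨
          VSCVert.eA G e ∈ F ∨ VSCVert.eB G e ∈ F := by
        by_contra hcon
        push_neg at hcon
        obtain ⟨h1, h2, h3, h4⟩ := hcon
        let va : {x : VSCVert G // x ∉ F} := ⟨VSCVert.eA G e, h3⟩
        let vb : {x : VSCVert G // x ∉ F} := ⟨VSCVert.eB G e, h4⟩
        let mu : {x : VSCVert G // x ∉ F} := ⟨VSCVert.vv G u, h1⟩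
        let mw : {x : VSCVert G // x ∉ F} := ⟨VSCVert.vv G w, h2⟩
        have e1 : (va.1, mu.1) ∈ VSCEdges G := Or.inl ⟨e, u, hu_mem, rfl⟩
        have e2 : (mu.1, vb.1) ∈ VSCEdges G := Or.inr ⟨e, u, hu_mem, rfl⟩
        have e3 : (va.1, mw.1) ∈ VSCEdges G := Or.inl ⟨e, w, hw_mem, rfl⟩
        have e4 : (mw.1, vb.1) ∈ VSCEdges G := Or.inr ⟨e, w, hw_mem, rfl⟩
        have hne1 : va ≠ mu := fun h => by have h' := congrArg Subtype.val h; cases h'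
        have hne2 : va ≠ vb := fun h =>
          by have h' := congrArg Subtype.val h; cases h'
        have hne3 : mu ≠ vb := fun h => by have h' := congrArg Subtype.val h; cases h'
        have hne1' : va ≠ mw := fun h => by have h' := congrArg Subtype.val h; cases h'
        have hne3' : mw ≠ vb := fun h => by have h' := congrArg Subtype.val h; cases h'
        have hp : IsSimplePath (fun a b : {x : VSCVert G // x ∉ F} =>
            (a.1, b.1) ∈ VSCEdges G) va vb [va, mu, vb] := by
          refine ⟨?_, rfl, rfl, ?_⟩
          · rw [List.Chain', List.isChain_cons_cons, List.isChain_cons_cons]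
            exact ⟨e1, e2, List.isChain_singleton _⟩
          · simp [List.nodup_cons, hne1, hne2, hne3]
        have hq : IsSimplePath (fun a b : {x : VSCVert G // x ∉ F} =>
            (a.1, b.1) ∈ VSCEdges G) va vb [va, mw, vb] := by
          refine ⟨?_, rfl, rfl, ?_⟩
          · rw [List.Chain', List.isChain_cons_cons, List.isChain_cons_cons]
            exact ⟨e3, e4, List.isChain_singleton _⟩
          · simp [List.nodup_cons, hne1', hne2, hne3']
        have heq := hsc va vb _ _ hp hq
        simp only [List.cons.injEq] at heq
        have : u = w := Sum.inl.inj (congrArg Subtype.val heq.2.1)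
        exact huw this
      rcases key with h | h | h | h
      · exact ⟨u, ⟨VSCVert.vv G u, h, rfl⟩, Sym2.mem_mk_left u w⟩
      · exact ⟨w, ⟨VSCVert.vv G w, h, rfl⟩, Sym2.mem_mk_right u w⟩
      · exact ⟨(Quot.out (e : Sym2 V)).1, ⟨VSCVert.eA G e, h, rfl⟩,
          Sym2.out_fst_mem _⟩
      · exact ⟨(Quot.out (e : Sym2 V)).1, ⟨VSCVert.eB G e, h, rfl⟩,
          Sym2.out_fst_mem _⟩
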